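/- Let k ≥ 1 and let M_N be a random tensor satisfying Hypothesis (TensorModel) with parameter (c,c'). Set S_{1,N} = ((2k)!·k!·c)^{-1/2} · Σ_{σ ∈ S_{2k}} M_{N,σ}. Then for all η, η' ∈ S_k, Φ_N(S_{1,N}·U_{N,η}·S_{1,N}^*·U_{N,η'}^*) converges to 1/k! as N → ∞ (in particular the limit does not depend on η or η'). -/

import Mathlib

open Filter Matrix

noncomputable section

/-- Glue two `k`-tuples of indices into a `2k`-tuple: positions `0,…,k-1` come from the
row index `i`, positions `k,…,2k-1` come from the column index `j`. -/
def glueIdx (k N : ℕ) (i j : Fin k → Fin N) : Fin (2 * k) → Fin N :=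
  fun s => if h : (s : ℕ) < k then i ⟨s, h⟩ else j ⟨(s : ℕ) - k, by have := s.isLt; omega⟩

/-- The flattening `M_{N,σ}` of a tensor `M ∈ (ℂ^N)^{⊗2k}`: the entry at row `i`
and column `j` is `M(x_{σ⁻¹(1)}, …, x_{σ⁻¹(2k)})` where `(x_1,…,x_{2k}) = (i, j)`. -/
def flatten (k N : ℕ) (M : (Fin (2 * k) → Fin N) → ℂ) (σ : Equiv.Perm (Fin (2 * k))) :
    Matrix (Fin k → Fin N) (Fin k → Fin N) ℂ :=
  fun i j => M fun s => glueIdx k N i j (σ.symm s)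

/-- The matrix `U_{N,η}` permuting the tensor factors of `(ℂ^N)^{⊗k}`:
`U_{N,η}(i,j) = ∏_s δ_{i_s, j_{η(s)}}`. -/
def Umat (k N : ℕ) (η : Equiv.Perm (Fin k)) :
    Matrix (Fin k → Fin N) (Fin k → Fin N) ℂ :=
  fun i j => if ∀ s, i s = j (η s) then 1 else 0

/-- `Φ_N(A) = E[N^{-k} · Tr A]` for a random `N^k × N^k` matrix `A`. -/
def Phi (k N : ℕ) {Ω : Type*} [MeasurableSpace Ω] (μ : MeasureTheory.Measure Ω)
    (A : Ω → Matrix (Fin k → Fin N) (Fin k → Fin N) ℂ) : ℂ :=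
  ∫ ω, ((N : ℂ) ^ k)⁻¹ * (A ω).trace ∂μ

/-- `Fin k ⊕ Fin k ≃ Fin (2k)`: the first summand goes to `0,…,k-1`, the second to
`k,…,2k-1`. -/
def finSumEquiv (k : ℕ) : (Fin k ⊕ Fin k) ≃ Fin (2 * k) :=
  finSumFinEquiv.trans (finCongr (by omega))

/-- The permutation `η ⊔ η'` of `{1,…,2k}` acting as `η` on the first `k` elements and as
`η'` on the last `k` elements. -/
def gluePerm (k : ℕ) (η η' : Equiv.Perm (Fin k)) : Equiv.Perm (Fin (2 * k)) :=
  (finSumEquiv k).permCongr (Equiv.sumCongr η η')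

/-- The involution `τ ∈ S_{2k}` swapping the first and the last `k` elements. -/
def tauPerm (k : ℕ) : Equiv.Perm (Fin (2 * k)) :=
  (finSumEquiv k).permCongr (Equiv.sumComm (Fin k) (Fin k))

/-- Hypothesis (TensorModel) with parameter `(c, c')`: for each `N`, a random tensor in
`(ℂ^N)^{⊗2k}` whose entries are i.i.d. copies of a centered complex random variable `m_N`
(of law `ν N`) having finite moments of all orders, with `N^k·E[|m_N|²] → c > 0`,
`N^k·E[m_N²] → c'`, and `N^k·E[m_N^{ℓ₁}·conj(m_N)^{ℓ₂}] → 0` whenever `ℓ₁ + ℓ₂ > 2`. -/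
structure TensorModel (k : ℕ) (c : ℝ) (c' : ℂ) where
  Ω : ℕ → Type
  [mΩ : ∀ N, MeasurableSpace (Ω N)]
  μ : ∀ N, MeasureTheory.Measure (Ω N)
  [prob : ∀ N, MeasureTheory.IsProbabilityMeasure (μ N)]
  X : ∀ N, (Fin (2 * k) → Fin N) → Ω N → ℂ
  meas : ∀ N i, Measurable (X N i)
  ν : ℕ → MeasureTheory.Measure ℂ
  law : ∀ N i, (μ N).map (X N i) = ν N
  indep : ∀ N, ProbabilityTheory.iIndepFun (X N) (μ N)
  centered : ∀ N, (∫ z : ℂ, z ∂(ν N)) = 0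
  finiteMoments : ∀ N (ℓ : ℕ), MeasureTheory.Integrable (fun z : ℂ => ‖z‖ ^ ℓ) (ν N)
  c_pos : 0 < c
  lim_abs_sq : Tendsto (fun N : ℕ => (N : ℝ) ^ k * ∫ z : ℂ, ‖z‖ ^ 2 ∂(ν N)) atTop (nhds c)
  lim_sq : Tendsto (fun N : ℕ => (N : ℂ) ^ k * ∫ z : ℂ, z ^ 2 ∂(ν N)) atTop (nhds c')
  lim_higher : ∀ ℓ₁ ℓ₂ : ℕ, 2 < ℓ₁ + ℓ₂ →
    Tendsto (fun N : ℕ => (N : ℂ) ^ k * ∫ z : ℂ, z ^ ℓ₁ * (starRingEnd ℂ z) ^ ℓ₂ ∂(ν N))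
      atTop (nhds 0)

instance {k : ℕ} {c : ℝ} {c' : ℂ} (M : TensorModel k c c') (N : ℕ) :
    MeasurableSpace (M.Ω N) := M.mΩ N

instance {k : ℕ} {c : ℝ} {c' : ℂ} (M : TensorModel k c c') (N : ℕ) :
    MeasureTheory.IsProbabilityMeasure (M.μ N) := M.prob N

/-- The flattening `M_{N,σ}` of the random tensor, as a random matrix. -/
def TensorModel.flat {k : ℕ} {c : ℝ} {c' : ℂ} (M : TensorModel k c c') (N : ℕ)
    (σ : Equiv.Perm (Fin (2 * k))) (ω : M.Ω N) :
    Matrix (Fin k → Fin N) (Fin k → Fin N) ℂ :=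
  flatten k N (fun idx => M.X N idx ω) σ

/-- `S_{1,N} = ((2k)!·k!·c)^{-1/2} · Σ_{σ ∈ S_{2k}} M_{N,σ}`. -/
def S1 {k : ℕ} {c : ℝ} {c' : ℂ} (M : TensorModel k c c') (N : ℕ) (ω : M.Ω N) :
    Matrix (Fin k → Fin N) (Fin k → Fin N) ℂ :=
  (((Real.sqrt ((((2 * k).factorial * k.factorial : ℕ) : ℝ) * c))⁻¹ : ℝ) : ℂ) •
    ∑ σ : Equiv.Perm (Fin (2 * k)), M.flat N σ ω

lemma finSumEquiv_symm_apply (k : ℕ) (s : Fin (2 * k)) :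
    (finSumEquiv k).symm s = if h : (s : ℕ) < k then Sum.inl ⟨s, h⟩
      else Sum.inr ⟨(s : ℕ) - k, by have := s.isLt; omega⟩ := by
  rw [Equiv.symm_apply_eq]
  split
  · apply Fin.ext
    simp [finSumEquiv, finCongr_apply]
  · apply Fin.ext
    simp [finSumEquiv, finCongr_apply]
    omega

lemma gluePerm_apply_coe (k : ℕ) (η η' : Equiv.Perm (Fin k)) (s : Fin (2 * k)) :
    ((gluePerm k η η' s : Fin (2 * k)) : ℕ) =
      if h : (s : ℕ) < k then (η ⟨s, h⟩ : ℕ)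
      else k + (η' ⟨(s : ℕ) - k, by have := s.isLt; omega⟩ : ℕ) := by
  unfold gluePerm
  rw [Equiv.permCongr_apply, finSumEquiv_symm_apply]
  split
  · simp [finSumEquiv, finCongr_apply]
  · simp [finSumEquiv, finCongr_apply]
    omega

lemma glue_comp {k N : ℕ} (η η' : Equiv.Perm (Fin k)) (q p : Fin k → Fin N)
    (x : Fin (2 * k)) :
    glueIdx k N (fun t => q (η t)) (fun t => p (η' t)) x
      = glueIdx k N q p (gluePerm k η η' x) := by
  unfold glueIdx
  have hco := gluePerm_apply_coe k η η' x
  by_cases h : (x : ℕ) < k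
  · rw [dif_pos h] at hco ⊢
    have hlt : ((gluePerm k η η' x : Fin (2*k)) : ℕ) < k := by rw [hco]; exact (η ⟨x, h⟩).isLt
    rw [dif_pos hlt]
    congr 1
    ext
    simp [hco]
  · rw [dif_neg h] at hco ⊢
    have hlt : ¬ ((gluePerm k η η' x : Fin (2*k)) : ℕ) < k := by rw [hco]; omega
    rw [dif_neg hlt]
    congr 1
    ext
    simp [hco]
lemma glue_bijective (k N : ℕ) :
    Function.Bijective (fun qp : (Fin k → Fin N) × (Fin k → Fin N) =>
      glueIdx k N qp.1 qp.2) := by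
  constructor
  · rintro ⟨q, p⟩ ⟨q', p'⟩ h
    simp only [Prod.mk.injEq]
    constructor
    · funext t
      have := congrFun h ⟨(t : ℕ), by omega⟩
      simpa [glueIdx, t.isLt] using this
    · funext t
      have := congrFun h ⟨k + (t : ℕ), by omega⟩
      have h2 : ¬ (k + (t : ℕ) < k) := by omega
      simpa [glueIdx, h2] using this
  · intro f
    refine ⟨⟨fun t => f ⟨(t : ℕ), by omega⟩, fun t => f ⟨k + (t : ℕ), by omega⟩⟩, ?_⟩
    funext s
    simp only [glueIdx]
    split
    · rename_i h
      congr 1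
    · rename_i h
      congr 1
      apply Fin.ext
      show k + ((s : ℕ) - k) = (s : ℕ)
      omega

/-- The number of functions invariant under precomposition with `π`. -/
def cnt (k N : ℕ) (π : Equiv.Perm (Fin (2 * k))) : ℕ :=
  (Finset.univ.filter (fun f : Fin (2 * k) → Fin N => (fun s => f (π s)) = f)).card

lemma cnt_one (k N : ℕ) : cnt k N 1 = N ^ (2 * k) := by
  unfold cnt
  simp [Finset.filter_true_of_mem]

lemma cnt_le (k N : ℕ) (π : Equiv.Perm (Fin (2 * k))) (hπ : π ≠ 1) :
    cnt k N π ≤ N ^ (2 * k - 1) := by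
  obtain ⟨u, hu⟩ : ∃ u, π u ≠ u := by
    by_contra h
    push_neg at h
    exact hπ (Equiv.ext h)
  have key : ∀ f : Fin (2 * k) → Fin N, (fun s => f (π s)) = f → f u = f (π.symm u) := by
    intro f hf
    have := congrFun hf (π.symm u)
    simpa using this
  have hne : π.symm u ≠ u := by
    intro h
    exact hu (by conv_lhs => rw [← h, Equiv.apply_symm_apply])
  calc cnt k N π ≤ Fintype.card ({x : Fin (2 * k) // x ≠ u} → Fin N) := by
        apply Finset.card_le_card_of_injOn (fun f x => f x.1) (fun _ _ => Finset.mem_univ _)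
        · intro f1 h1 f2 h2 h12
          simp only [Finset.mem_coe, Finset.mem_filter] at h1 h2
          funext x
          by_cases hx : x = u
          · rw [hx, key f1 h1.2, key f2 h2.2]
            exact congrFun h12 ⟨π.symm u, hne⟩
          · exact congrFun h12 ⟨x, hx⟩
    _ = N ^ (2 * k - 1) := by
        rw [Fintype.card_fun]
        have h1 : Fintype.card {x : Fin (2 * k) // x ≠ u} = 2 * k - 1 := by
          simp [Fintype.card_subtype_compl]
        rw [h1, Fintype.card_fin]
lemma sum_glue_invariant {k N : ℕ} (π : Equiv.Perm (Fin (2 * k))) (v : ℂ) :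
    (∑ q : Fin k → Fin N, ∑ p : Fin k → Fin N,
        if (fun s => glueIdx k N q p (π s)) = glueIdx k N q p then v else 0)
      = (cnt k N π : ℂ) * v := by
  classical
  set G : (Fin (2 * k) → Fin N) → ℂ := fun f => if (fun s => f (π s)) = f then v else 0 with hG
  have h1 : (∑ q : Fin k → Fin N, ∑ p : Fin k → Fin N, G (glueIdx k N q p))
      = ∑ qp : (Fin k → Fin N) × (Fin k → Fin N), G (glueIdx k N qp.1 qp.2) :=
    (Fintype.sum_prod_type (fun qp : (Fin k → Fin N) × (Fin k → Fin N) => G (glueIdx k N qp.1 qp.2))).symm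
  have h2 : (∑ qp : (Fin k → Fin N) × (Fin k → Fin N), G (glueIdx k N qp.1 qp.2))
      = ∑ f : Fin (2 * k) → Fin N, G f :=
    Fintype.sum_bijective _ (glue_bijective k N) _ G (fun _ => rfl)
  have h3 : (∑ f : Fin (2 * k) → Fin N, G f) = (cnt k N π : ℂ) * v := by
    rw [hG]
    rw [← Finset.sum_filter]
    rw [Finset.sum_const, cnt, nsmul_eq_mul]
  exact (h1.trans h2).trans h3

lemma Umat_eq {k N : ℕ} (η : Equiv.Perm (Fin k)) (i j : Fin k → Fin N) :
    Umat k N η i j = if i = fun s => j (η s) then 1 else 0 := by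
  by_cases h : ∀ s, i s = j (η s)
  · rw [Umat, if_pos h, if_pos (funext h)]
  · rw [Umat, if_neg h, if_neg (fun he => h fun s => congrFun he s)]

lemma trace_form {k N : ℕ} (η η' : Equiv.Perm (Fin k))
    (A B : Matrix (Fin k → Fin N) (Fin k → Fin N) ℂ) :
    (A * Umat k N η * Bᴴ * (Umat k N η')ᴴ).trace
      = ∑ q : Fin k → Fin N, ∑ p : Fin k → Fin N,
          A (fun s => q (η' s)) (fun s => p (η s)) * (starRingEnd ℂ) (B q p) := by
  rw [Matrix.trace_mul_comm]
  simp only [Matrix.trace, Matrix.diag, Matrix.mul_apply, Matrix.conjTranspose_apply, Umat_eq,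
    apply_ite (starRingEnd ℂ), _root_.map_one, _root_.map_zero, ite_mul, one_mul, zero_mul, mul_ite, mul_one, mul_zero]
  simp [Finset.sum_ite_eq', Finset.mul_sum, Finset.sum_mul]
open MeasureTheory ProbabilityTheory in
lemma indepFun_integral_mul_complex {Ω : Type*} [MeasurableSpace Ω] {μ : Measure Ω}
    {X Y : Ω → ℂ} (h : IndepFun X Y μ) (hX : Integrable X μ) (hY : Integrable Y μ) :
    ∫ ω, X ω * Y ω ∂μ = (∫ ω, X ω ∂μ) * (∫ ω, Y ω ∂μ) := by
  have hXr : Integrable (fun ω => (X ω).re) μ := hX.re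
  have hXi : Integrable (fun ω => (X ω).im) μ := hX.im
  have hYr : Integrable (fun ω => (Y ω).re) μ := hY.re
  have hYi : Integrable (fun ω => (Y ω).im) μ := hY.im
  have irr : IndepFun (fun ω => (X ω).re) (fun ω => (Y ω).re) μ :=
    h.comp Complex.measurable_re Complex.measurable_re
  have iri : IndepFun (fun ω => (X ω).re) (fun ω => (Y ω).im) μ :=
    h.comp Complex.measurable_re Complex.measurable_im
  have iir : IndepFun (fun ω => (X ω).im) (fun ω => (Y ω).re) μ :=
    h.comp Complex.measurable_im Complex.measurable_re
  have iii : IndepFun (fun ω => (X ω).im) (fun ω => (Y ω).im) μ :=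
    h.comp Complex.measurable_im Complex.measurable_im
  have hrr : ∫ ω, (X ω).re * (Y ω).re ∂μ = (∫ ω, (X ω).re ∂μ) * ∫ ω, (Y ω).re ∂μ :=
    IndepFun.integral_mul_eq_mul_integral irr hXr.1 hYr.1
  have hri : ∫ ω, (X ω).re * (Y ω).im ∂μ = (∫ ω, (X ω).re ∂μ) * ∫ ω, (Y ω).im ∂μ :=
    IndepFun.integral_mul_eq_mul_integral iri hXr.1 hYi.1
  have hir : ∫ ω, (X ω).im * (Y ω).re ∂μ = (∫ ω, (X ω).im ∂μ) * ∫ ω, (Y ω).re ∂μ :=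
    IndepFun.integral_mul_eq_mul_integral iir hXi.1 hYr.1
  have hii : ∫ ω, (X ω).im * (Y ω).im ∂μ = (∫ ω, (X ω).im ∂μ) * ∫ ω, (Y ω).im ∂μ :=
    IndepFun.integral_mul_eq_mul_integral iii hXi.1 hYi.1
  have mrr : Integrable (fun ω => (X ω).re * (Y ω).re) μ := IndepFun.integrable_mul irr hXr hYr
  have mri : Integrable (fun ω => (X ω).re * (Y ω).im) μ := IndepFun.integrable_mul iri hXr hYi
  have mir : Integrable (fun ω => (X ω).im * (Y ω).re) μ := IndepFun.integrable_mul iir hXi hYr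
  have mii : Integrable (fun ω => (X ω).im * (Y ω).im) μ := IndepFun.integrable_mul iii hXi hYi
  have hmul : Integrable (fun ω => X ω * Y ω) μ := IndepFun.integrable_mul h hX hY
  have eXr : (∫ ω, X ω ∂μ).re = ∫ ω, (X ω).re ∂μ := (integral_re hX).symm
  have eXi : (∫ ω, X ω ∂μ).im = ∫ ω, (X ω).im ∂μ := (integral_im hX).symm
  have eYr : (∫ ω, Y ω ∂μ).re = ∫ ω, (Y ω).re ∂μ := (integral_re hY).symm
  have eYi : (∫ ω, Y ω ∂μ).im = ∫ ω, (Y ω).im ∂μ := (integral_im hY).symm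
  have eMr : (∫ ω, X ω * Y ω ∂μ).re = ∫ ω, (X ω * Y ω).re ∂μ := (integral_re hmul).symm
  have eMi : (∫ ω, X ω * Y ω ∂μ).im = ∫ ω, (X ω * Y ω).im ∂μ := (integral_im hmul).symm
  apply Complex.ext
  · rw [eMr, Complex.mul_re, eXr, eXi, eYr, eYi]
    simp only [Complex.mul_re]
    rw [integral_sub mrr mii, hrr, hii]
  · rw [eMi, Complex.mul_im, eXr, eXi, eYr, eYi]
    simp only [Complex.mul_im]
    rw [integral_add mri mir, hri, hir]
open MeasureTheory ProbabilityTheory in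
lemma integrable_conj'' {Ω : Type*} [MeasurableSpace Ω] {μ : Measure Ω} {f : Ω → ℂ}
    (hf : Integrable f μ) : Integrable (fun ω => (starRingEnd ℂ) (f ω)) μ := by
  refine ⟨?_, ?_⟩
  · simp only [starRingEnd_apply]
    exact (continuous_star.comp_aestronglyMeasurable hf.1)
  · have h := hf.2
    rw [MeasureTheory.hasFiniteIntegral_iff_norm] at h ⊢
    have he : ∀ ω, ‖(starRingEnd ℂ) (f ω)‖ = ‖f ω‖ := fun ω => RCLike.norm_conj _
    simp_rw [he]
    exact h

section Model

open MeasureTheory ProbabilityTheory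

variable {k : ℕ} {c : ℝ} {c' : ℂ} (M : TensorModel k c c') (N : ℕ)

lemma TensorModel.integrable_X (a : Fin (2 * k) → Fin N) :
    Integrable (M.X N a) (M.μ N) := by
  have h1 : Integrable id (M.ν N) := by
    rw [← integrable_norm_iff measurable_id.aestronglyMeasurable]
    simpa using M.finiteMoments N 1
  have h2 : Integrable id ((M.μ N).map (M.X N a)) := by rw [M.law N a]; exact h1
  exact (integrable_map_measure measurable_id.aestronglyMeasurable
    (M.meas N a).aemeasurable).mp h2

lemma TensorModel.integral_X (a : Fin (2 * k) → Fin N) :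
    ∫ ω, M.X N a ω ∂(M.μ N) = 0 := by
  have h2 : AEStronglyMeasurable (id : ℂ → ℂ) ((M.μ N).map (M.X N a)) :=
    measurable_id.aestronglyMeasurable
  calc ∫ ω, M.X N a ω ∂(M.μ N) = ∫ z : ℂ, z ∂((M.μ N).map (M.X N a)) :=
        (integral_map (M.meas N a).aemeasurable h2).symm
    _ = 0 := by rw [M.law N a]; exact M.centered N

lemma TensorModel.integrable_normsq (a : Fin (2 * k) → Fin N) :
    Integrable (fun ω => ‖M.X N a ω‖ ^ 2) (M.μ N) := by
  have h2 : Integrable (fun z : ℂ => ‖z‖ ^ 2) ((M.μ N).map (M.X N a)) := by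
    rw [M.law N a]; exact M.finiteMoments N 2
  exact (integrable_map_measure (continuous_norm.pow 2).aestronglyMeasurable
    (M.meas N a).aemeasurable).mp h2

lemma TensorModel.integral_normsq (a : Fin (2 * k) → Fin N) :
    ∫ ω, ‖M.X N a ω‖ ^ 2 ∂(M.μ N) = ∫ z : ℂ, ‖z‖ ^ 2 ∂(M.ν N) := by
  have h2 : AEStronglyMeasurable (fun z : ℂ => ‖z‖ ^ 2) ((M.μ N).map (M.X N a)) :=
    (continuous_norm.pow 2).aestronglyMeasurable
  calc ∫ ω, ‖M.X N a ω‖ ^ 2 ∂(M.μ N)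
      = ∫ z : ℂ, ‖z‖ ^ 2 ∂((M.μ N).map (M.X N a)) :=
        (integral_map (M.meas N a).aemeasurable h2).symm
    _ = ∫ z : ℂ, ‖z‖ ^ 2 ∂(M.ν N) := by rw [M.law N a]

lemma mul_conj_self_eq (f : ℂ) : f * (starRingEnd ℂ) f = ((‖f‖ ^ 2 : ℝ) : ℂ) := by
  rw [Complex.mul_conj, Complex.normSq_eq_norm_sq]

lemma TensorModel.integrable_prod (a b : Fin (2 * k) → Fin N) :
    Integrable (fun ω => M.X N a ω * (starRingEnd ℂ) (M.X N b ω)) (M.μ N) := by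
  by_cases h : a = b
  · subst h
    have he : (fun ω => M.X N a ω * (starRingEnd ℂ) (M.X N a ω))
        = fun ω => ((‖M.X N a ω‖ ^ 2 : ℝ) : ℂ) := funext fun ω => mul_conj_self_eq _
    rw [he]
    exact (M.integrable_normsq N a).ofReal
  · have hind : IndepFun (M.X N a) (M.X N b) (M.μ N) := (M.indep N).indepFun h
    have hind2 : IndepFun (M.X N a) (fun ω => (starRingEnd ℂ) (M.X N b ω)) (M.μ N) := by
      exact hind.comp measurable_id (continuous_star.measurable : Measurable (star : ℂ → ℂ))
    exact hind2.integrable_mul (M.integrable_X N a) (integrable_conj'' (M.integrable_X N b))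

lemma TensorModel.integral_prod (a b : Fin (2 * k) → Fin N) :
    ∫ ω, M.X N a ω * (starRingEnd ℂ) (M.X N b ω) ∂(M.μ N)
      = if a = b then (((∫ z : ℂ, ‖z‖ ^ 2 ∂(M.ν N)) : ℝ) : ℂ) else 0 := by
  by_cases h : a = b
  · subst h
    rw [if_pos rfl]
    have he : (fun ω => M.X N a ω * (starRingEnd ℂ) (M.X N a ω))
        = fun ω => ((‖M.X N a ω‖ ^ 2 : ℝ) : ℂ) := funext fun ω => mul_conj_self_eq _
    have h3 := ContinuousLinearMap.integral_comp_comm Complex.ofRealCLM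
      (M.integrable_normsq N a)
    simp only [Complex.ofRealCLM_apply] at h3
    rw [he, h3, M.integral_normsq N a]
  · rw [if_neg h]
    have hind : IndepFun (M.X N a) (M.X N b) (M.μ N) := (M.indep N).indepFun h
    have hind2 : IndepFun (M.X N a) (fun ω => (starRingEnd ℂ) (M.X N b ω)) (M.μ N) := by
      exact hind.comp measurable_id (continuous_star.measurable : Measurable (star : ℂ → ℂ))
    rw [indepFun_integral_mul_complex hind2 (M.integrable_X N a)
      (integrable_conj'' (M.integrable_X N b)), M.integral_X N a, zero_mul]

end Model
section Main

open MeasureTheory ProbabilityTheory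

variable {k : ℕ} {c : ℝ} {c' : ℂ}

lemma sum_swap' {α β : Type*} [Fintype α] [Fintype β] (F : α → β → ℂ) :
    (∑ x : α, ∑ y : β, F x y) = ∑ y : β, ∑ x : α, F x y := Finset.sum_comm

lemma S1_trace_eq (M : TensorModel k c c') (N : ℕ)
    (η η' : Equiv.Perm (Fin k)) (ω : M.Ω N) :
    (S1 M N ω * Umat k N η * (S1 M N ω)ᴴ * (Umat k N η')ᴴ).trace
      = (((Real.sqrt ((((2 * k).factorial * k.factorial : ℕ) : ℝ) * c))⁻¹ : ℝ) : ℂ) ^ 2 *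
          ∑ q : Fin k → Fin N, ∑ p : Fin k → Fin N,
          ∑ σ : Equiv.Perm (Fin (2 * k)), ∑ σ' : Equiv.Perm (Fin (2 * k)),
            M.X N (fun s => glueIdx k N q p (gluePerm k η' η (σ.symm s))) ω *
              (starRingEnd ℂ) (M.X N (fun s => glueIdx k N q p (σ'.symm s)) ω) := by
  set β : ℂ := (((Real.sqrt ((((2 * k).factorial * k.factorial : ℕ) : ℝ) * c))⁻¹ : ℝ) : ℂ)
    with hβ
  set A : Matrix (Fin k → Fin N) (Fin k → Fin N) ℂ :=
    ∑ σ : Equiv.Perm (Fin (2 * k)), M.flat N σ ω with hA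
  have h1 : S1 M N ω = β • A := rfl
  have hstar : star β = β := by rw [hβ]; exact Complex.conj_ofReal _
  rw [h1, Matrix.conjTranspose_smul, hstar]
  simp only [smul_mul_assoc, mul_smul_comm, Matrix.trace_smul, smul_eq_mul]
  rw [← mul_assoc, ← sq]
  congr 1
  rw [trace_form η η' A A]
  refine Finset.sum_congr rfl fun q _ => ?_
  refine Finset.sum_congr rfl fun p _ => ?_
  rw [hA, Matrix.sum_apply, Matrix.sum_apply, map_sum, Finset.sum_mul_sum]
  refine Finset.sum_congr rfl fun σ _ => ?_
  refine Finset.sum_congr rfl fun σ' _ => ?_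
  congr 1
  show M.X N (fun s => glueIdx k N (fun t => q (η' t)) (fun t => p (η t)) (σ.symm s)) ω = _
  congr 1
  funext s
  exact glue_comp η' η q p (σ.symm s)

lemma cond_iff {N : ℕ} (η η' : Equiv.Perm (Fin k)) (σ σ' : Equiv.Perm (Fin (2 * k)))
    (q p : Fin k → Fin N) :
    ((fun s => glueIdx k N q p (gluePerm k η' η (σ.symm s)))
        = fun s => glueIdx k N q p (σ'.symm s))
      ↔ ((fun s => glueIdx k N q p ((gluePerm k η' η * σ⁻¹ * σ') s)) = glueIdx k N q p) := by
  constructor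
  · intro h
    funext t
    have := congrFun h (σ' t)
    simpa [Equiv.Perm.mul_apply] using this
  · intro h
    funext s
    have := congrFun h (σ'.symm s)
    simpa [Equiv.Perm.mul_apply] using this

lemma phi_eq (M : TensorModel k c c') (N : ℕ) (η η' : Equiv.Perm (Fin k)) :
    Phi k N (M.μ N) (fun ω => S1 M N ω * Umat k N η * (S1 M N ω)ᴴ * (Umat k N η')ᴴ)
      = ((N : ℂ) ^ k)⁻¹ *
          (((Real.sqrt ((((2 * k).factorial * k.factorial : ℕ) : ℝ) * c))⁻¹ : ℝ) : ℂ) ^ 2 *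
          ∑ σ : Equiv.Perm (Fin (2 * k)), ∑ σ' : Equiv.Perm (Fin (2 * k)),
            (cnt k N (gluePerm k η' η * σ⁻¹ * σ') : ℂ) *
              (((∫ z : ℂ, ‖z‖ ^ 2 ∂(M.ν N)) : ℝ) : ℂ) := by
  set β : ℂ := (((Real.sqrt ((((2 * k).factorial * k.factorial : ℕ) : ℝ) * c))⁻¹ : ℝ) : ℂ)
  set rC : ℂ := (((∫ z : ℂ, ‖z‖ ^ 2 ∂(M.ν N)) : ℝ) : ℂ)
  unfold Phi
  have hpt : ∀ ω : M.Ω N,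
      ((N : ℂ) ^ k)⁻¹ * (S1 M N ω * Umat k N η * (S1 M N ω)ᴴ * (Umat k N η')ᴴ).trace
        = (((N : ℂ) ^ k)⁻¹ * β ^ 2) *
            ∑ q : Fin k → Fin N, ∑ p : Fin k → Fin N,
            ∑ σ : Equiv.Perm (Fin (2 * k)), ∑ σ' : Equiv.Perm (Fin (2 * k)),
              M.X N (fun s => glueIdx k N q p (gluePerm k η' η (σ.symm s))) ω *
                (starRingEnd ℂ) (M.X N (fun s => glueIdx k N q p (σ'.symm s)) ω) := by
    intro ω
    rw [S1_trace_eq M N η η' ω, mul_assoc]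
  rw [integral_congr_ae (Filter.Eventually.of_forall hpt)]
  rw [integral_const_mul]
  rw [integral_finset_sum _ (fun q _ => integrable_finset_sum _ (fun p _ =>
    integrable_finset_sum _ (fun σ _ => integrable_finset_sum _ (fun σ' _ =>
      M.integrable_prod N _ _))))]
  congr 1
  have hqp : ∀ q : Fin k → Fin N,
      (∫ ω, ∑ p : Fin k → Fin N, ∑ σ : Equiv.Perm (Fin (2 * k)),
          ∑ σ' : Equiv.Perm (Fin (2 * k)),
          M.X N (fun s => glueIdx k N q p (gluePerm k η' η (σ.symm s))) ω *
            (starRingEnd ℂ) (M.X N (fun s => glueIdx k N q p (σ'.symm s)) ω) ∂(M.μ N))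
        = ∑ p : Fin k → Fin N, ∑ σ : Equiv.Perm (Fin (2 * k)),
            ∑ σ' : Equiv.Perm (Fin (2 * k)),
            if (fun s => glueIdx k N q p ((gluePerm k η' η * σ⁻¹ * σ') s)) = glueIdx k N q p
              then rC else 0 := by
    intro q
    rw [integral_finset_sum _ (fun p _ => integrable_finset_sum _ (fun σ _ =>
      integrable_finset_sum _ (fun σ' _ => M.integrable_prod N _ _)))]
    refine Finset.sum_congr rfl fun p _ => ?_
    rw [integral_finset_sum _ (fun σ _ => integrable_finset_sum _ (fun σ' _ =>
      M.integrable_prod N _ _))]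
    refine Finset.sum_congr rfl fun σ _ => ?_
    rw [integral_finset_sum _ (fun σ' _ => M.integrable_prod N _ _)]
    refine Finset.sum_congr rfl fun σ' _ => ?_
    rw [M.integral_prod N _ _]
    exact if_congr (cond_iff η η' σ σ' q p) rfl rfl
  calc (∑ q : Fin k → Fin N, ∫ ω, ∑ p : Fin k → Fin N, ∑ σ : Equiv.Perm (Fin (2 * k)),
          ∑ σ' : Equiv.Perm (Fin (2 * k)),
          M.X N (fun s => glueIdx k N q p (gluePerm k η' η (σ.symm s))) ω *
            (starRingEnd ℂ) (M.X N (fun s => glueIdx k N q p (σ'.symm s)) ω) ∂(M.μ N))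
      = ∑ q : Fin k → Fin N, ∑ p : Fin k → Fin N, ∑ σ : Equiv.Perm (Fin (2 * k)),
          ∑ σ' : Equiv.Perm (Fin (2 * k)),
          if (fun s => glueIdx k N q p ((gluePerm k η' η * σ⁻¹ * σ') s)) = glueIdx k N q p
            then rC else 0 := Finset.sum_congr rfl fun q _ => hqp q
    _ = ∑ σ : Equiv.Perm (Fin (2 * k)), ∑ σ' : Equiv.Perm (Fin (2 * k)),
          ∑ q : Fin k → Fin N, ∑ p : Fin k → Fin N,
          if (fun s => glueIdx k N q p ((gluePerm k η' η * σ⁻¹ * σ') s)) = glueIdx k N q p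
            then rC else 0 := by
        rw [show (∑ q : Fin k → Fin N, ∑ p : Fin k → Fin N, ∑ σ : Equiv.Perm (Fin (2 * k)),
            ∑ σ' : Equiv.Perm (Fin (2 * k)),
            (if (fun s => glueIdx k N q p ((gluePerm k η' η * σ⁻¹ * σ') s)) = glueIdx k N q p
              then rC else 0))
            = ∑ q : Fin k → Fin N, ∑ σ : Equiv.Perm (Fin (2 * k)), ∑ p : Fin k → Fin N,
            ∑ σ' : Equiv.Perm (Fin (2 * k)),
            (if (fun s => glueIdx k N q p ((gluePerm k η' η * σ⁻¹ * σ') s)) = glueIdx k N q p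
              then rC else 0) from Finset.sum_congr rfl fun q _ => sum_swap' _]
        rw [show (∑ q : Fin k → Fin N, ∑ σ : Equiv.Perm (Fin (2 * k)), ∑ p : Fin k → Fin N,
            ∑ σ' : Equiv.Perm (Fin (2 * k)),
            (if (fun s => glueIdx k N q p ((gluePerm k η' η * σ⁻¹ * σ') s)) = glueIdx k N q p
              then rC else 0))
            = ∑ σ : Equiv.Perm (Fin (2 * k)), ∑ q : Fin k → Fin N, ∑ p : Fin k → Fin N,
            ∑ σ' : Equiv.Perm (Fin (2 * k)),
            (if (fun s => glueIdx k N q p ((gluePerm k η' η * σ⁻¹ * σ') s)) = glueIdx k N q p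
              then rC else 0) from sum_swap' _]
        refine Finset.sum_congr rfl fun σ _ => ?_
        rw [show (∑ q : Fin k → Fin N, ∑ p : Fin k → Fin N,
            ∑ σ' : Equiv.Perm (Fin (2 * k)),
            (if (fun s => glueIdx k N q p ((gluePerm k η' η * σ⁻¹ * σ') s)) = glueIdx k N q p
              then rC else 0))
            = ∑ q : Fin k → Fin N, ∑ σ' : Equiv.Perm (Fin (2 * k)), ∑ p : Fin k → Fin N,
            (if (fun s => glueIdx k N q p ((gluePerm k η' η * σ⁻¹ * σ') s)) = glueIdx k N q p
              then rC else 0) from Finset.sum_congr rfl fun q _ => sum_swap' _]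
        exact sum_swap' _
    _ = ∑ σ : Equiv.Perm (Fin (2 * k)), ∑ σ' : Equiv.Perm (Fin (2 * k)),
          (cnt k N (gluePerm k η' η * σ⁻¹ * σ') : ℂ) * rC := by
        refine Finset.sum_congr rfl fun σ _ => Finset.sum_congr rfl fun σ' _ => ?_
        exact sum_glue_invariant _ rC

end Main
section Limits

open MeasureTheory ProbabilityTheory

variable {k : ℕ} {c : ℝ} {c' : ℂ}

lemma r_nonneg (M : TensorModel k c c') (N : ℕ) : 0 ≤ ∫ z : ℂ, ‖z‖ ^ 2 ∂(M.ν N) :=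
  integral_nonneg fun z => by positivity

lemma tendsto_term (hk : 1 ≤ k) (M : TensorModel k c c') (π : Equiv.Perm (Fin (2 * k))) :
    Tendsto (fun N : ℕ => ((N : ℂ) ^ k)⁻¹ *
        ((cnt k N π : ℂ) * (((∫ z : ℂ, ‖z‖ ^ 2 ∂(M.ν N)) : ℝ) : ℂ)))
      atTop (nhds (if π = 1 then (c : ℂ) else 0)) := by
  set r : ℕ → ℝ := fun N => ∫ z : ℂ, ‖z‖ ^ 2 ∂(M.ν N) with hr
  by_cases hπ : π = 1
  · rw [if_pos hπ]
    have base : Tendsto (fun N : ℕ => (((N : ℝ) ^ k * r N : ℝ) : ℂ)) atTop (nhds (c : ℂ)) :=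
      (Complex.continuous_ofReal.tendsto c).comp M.lim_abs_sq
    apply base.congr'
    filter_upwards [Filter.eventually_ge_atTop 1] with N hN
    have hN0 : ((N : ℂ)) ≠ 0 := Nat.cast_ne_zero.mpr (by omega)
    have hNk : ((N : ℂ) ^ k) ≠ 0 := pow_ne_zero _ hN0
    rw [hπ, cnt_one]
    rw [Complex.ofReal_mul, Complex.ofReal_pow, Complex.ofReal_natCast, Nat.cast_pow,
      two_mul, pow_add]
    field_simp
    rw [hr]
  · rw [if_neg hπ]
    apply squeeze_zero_norm'
      (a := fun N : ℕ => ((N : ℝ) ^ k * r N) * ((N : ℝ))⁻¹)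
    · filter_upwards [Filter.eventually_ge_atTop 1] with N hN
      have hN0 : (0 : ℝ) < (N : ℝ) := by exact_mod_cast hN
      have hNk : (0 : ℝ) < (N : ℝ) ^ k := pow_pos hN0 k
      have hrn : (0 : ℝ) ≤ r N := r_nonneg M N
      have hnorm : ‖((N : ℂ) ^ k)⁻¹ * ((cnt k N π : ℂ) * ((r N : ℝ) : ℂ))‖
          = ((N : ℝ) ^ k)⁻¹ * ((cnt k N π : ℝ) * r N) := by
        rw [norm_mul, norm_mul, norm_inv, norm_pow]
        simp [Complex.norm_natCast, Complex.norm_real, Real.norm_eq_abs, abs_of_nonneg hrn]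
      rw [hnorm]
      have hcnt : (cnt k N π : ℝ) ≤ (N : ℝ) ^ (2 * k - 1) := by
        exact_mod_cast cnt_le k N π hπ
      have step1 : ((N : ℝ) ^ k)⁻¹ * ((cnt k N π : ℝ) * r N)
          ≤ ((N : ℝ) ^ k)⁻¹ * ((N : ℝ) ^ (2 * k - 1) * r N) := by
        apply mul_le_mul_of_nonneg_left (mul_le_mul_of_nonneg_right hcnt hrn)
        positivity
      refine step1.trans (le_of_eq ?_)
      have h2k : 2 * k - 1 = k + (k - 1) := by omega
      have hkk : k = (k - 1) + 1 := by omega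
      rw [h2k, pow_add]
      rw [show (N : ℝ) ^ k * r N * ((N : ℝ))⁻¹ = (N : ℝ) ^ k * ((N : ℝ))⁻¹ * r N by ring]
      rw [show ((N : ℝ) ^ k)⁻¹ * ((N : ℝ) ^ k * (N : ℝ) ^ (k - 1) * r N)
          = (N : ℝ) ^ (k - 1) * r N by field_simp]
      congr 1
      conv_rhs => rw [hkk]
      rw [pow_succ]
      field_simp
    · have := M.lim_abs_sq.mul tendsto_inv_atTop_nhds_zero_nat
      simpa using this

end Limits
/-- For a random tensor satisfying Hypothesis (TensorModel) with parameter
`(c, c')`, for all `η, η' ∈ S_k`, `Φ_N(S_{1,N}·U_{N,η}·S_{1,N}^*·U_{N,η'}^*)` converges to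
`1/k!` as `N → ∞` (in particular the limit does not depend on `η` or `η'`). -/
theorem covariance_S1 (k : ℕ) (hk : 1 ≤ k) (c : ℝ) (c' : ℂ) (M : TensorModel k c c')
    (η η' : Equiv.Perm (Fin k)) :
    Tendsto (fun N : ℕ =>
        Phi k N (M.μ N) (fun ω =>
          S1 M N ω * Umat k N η * (S1 M N ω)ᴴ * (Umat k N η')ᴴ))
      atTop (nhds (1 / (k.factorial : ℂ))) := by
  classical
  set g : Equiv.Perm (Fin (2 * k)) := gluePerm k η' η with hg
  set β : ℂ := (((Real.sqrt ((((2 * k).factorial * k.factorial : ℕ) : ℝ) * c))⁻¹ : ℝ) : ℂ)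
    with hβ
  have hsum : Tendsto (fun N : ℕ => ∑ σ : Equiv.Perm (Fin (2 * k)),
      ∑ σ' : Equiv.Perm (Fin (2 * k)),
        β ^ 2 * (((N : ℂ) ^ k)⁻¹ *
          ((cnt k N (g * σ⁻¹ * σ') : ℂ) * (((∫ z : ℂ, ‖z‖ ^ 2 ∂(M.ν N)) : ℝ) : ℂ))))
      atTop (nhds (∑ σ : Equiv.Perm (Fin (2 * k)), ∑ σ' : Equiv.Perm (Fin (2 * k)),
        β ^ 2 * (if g * σ⁻¹ * σ' = 1 then (c : ℂ) else 0))) := by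
    refine tendsto_finset_sum _ fun σ _ => tendsto_finset_sum _ fun σ' _ => ?_
    exact tendsto_const_nhds.mul (tendsto_term hk M _)
  have hval : (∑ σ : Equiv.Perm (Fin (2 * k)), ∑ σ' : Equiv.Perm (Fin (2 * k)),
      β ^ 2 * (if g * σ⁻¹ * σ' = 1 then (c : ℂ) else 0)) = 1 / (k.factorial : ℂ) := by
    have hcond : ∀ σ σ' : Equiv.Perm (Fin (2 * k)),
        (g * σ⁻¹ * σ' = 1) ↔ (σ * g⁻¹ = σ') := by
      intro σ σ'
      rw [mul_eq_one_iff_inv_eq, _root_.mul_inv_rev, inv_inv]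
    have h1 : ∀ σ : Equiv.Perm (Fin (2 * k)),
        (∑ σ' : Equiv.Perm (Fin (2 * k)),
          β ^ 2 * (if g * σ⁻¹ * σ' = 1 then (c : ℂ) else 0)) = β ^ 2 * (c : ℂ) := by
      intro σ
      have : ∀ σ' : Equiv.Perm (Fin (2 * k)),
          β ^ 2 * (if g * σ⁻¹ * σ' = 1 then (c : ℂ) else 0)
            = if σ * g⁻¹ = σ' then β ^ 2 * (c : ℂ) else 0 := by
        intro σ'
        rw [mul_ite, mul_zero, if_congr (hcond σ σ') rfl rfl]
      rw [Finset.sum_congr rfl fun σ' _ => this σ']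
      rw [Finset.sum_ite_eq]
      simp
    rw [Finset.sum_congr rfl fun σ _ => h1 σ, Finset.sum_const, Finset.card_univ,
      Fintype.card_perm, Fintype.card_fin, nsmul_eq_mul]
    -- now : ((2k)! : ℂ) * (β^2 * c) = 1 / k!
    have hc0 : (0 : ℝ) < c := M.c_pos
    have hx : (0 : ℝ) ≤ ((((2 * k).factorial * k.factorial : ℕ) : ℝ) * c) := by positivity
    have hb : ((Real.sqrt ((((2 * k).factorial * k.factorial : ℕ) : ℝ) * c))⁻¹ : ℝ) ^ 2
        = ((((2 * k).factorial * k.factorial : ℕ) : ℝ) * c)⁻¹ := by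
      rw [inv_pow, Real.sq_sqrt hx]
    have hreal : (((2 * k).factorial : ℕ) : ℝ) *
        (((Real.sqrt ((((2 * k).factorial * k.factorial : ℕ) : ℝ) * c))⁻¹ : ℝ) ^ 2 * c)
        = 1 / ((k.factorial : ℕ) : ℝ) := by
      rw [hb]
      have h2 : (0:ℝ) < (((2 * k).factorial : ℕ) : ℝ) := by
        exact_mod_cast Nat.factorial_pos _
      have h3 : (0:ℝ) < ((k.factorial : ℕ) : ℝ) := by
        exact_mod_cast Nat.factorial_pos _
      push_cast
      field_simp
    calc (((2 * k).factorial : ℕ) : ℂ) * (β ^ 2 * (c : ℂ))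
        = (((((2 * k).factorial : ℕ) : ℝ) *
            (((Real.sqrt ((((2 * k).factorial * k.factorial : ℕ) : ℝ) * c))⁻¹ : ℝ) ^ 2 * c)
            : ℝ) : ℂ) := by
          rw [hβ]
          push_cast
          ring
      _ = ((1 / ((k.factorial : ℕ) : ℝ) : ℝ) : ℂ) := by rw [hreal]
      _ = 1 / (k.factorial : ℂ) := by push_cast; ring
  rw [hval] at hsum
  apply hsum.congr
  intro N
  rw [phi_eq M N η η']
  rw [Finset.mul_sum]
  refine Finset.sum_congr rfl fun σ _ => ?_
  rw [Finset.mul_sum]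
  refine Finset.sum_congr rfl fun σ' _ => ?_
  ring
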